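/- If G1 and G2 are distinct graphs on {1,...,n} (n ≥ 2) lying in the same coset of the subspace W of complete bipartite graphs (i.e., G1 ⊕ G2 = B(S) for some S), then G1 ∩ G2 is disconnected. -/

import Mathlib

/-- `B S` is the complete bipartite graph with parts `S` and `Sᶜ`. -/
def B {n : ℕ} (S : Set (Fin n)) : SimpleGraph (Fin n) where
  Adj u v := (u ∈ S ∧ v ∉ S) ∨ (u ∉ S ∧ v ∈ S)
  symm := ⟨fun u v h => by tauto⟩
  loopless := ⟨fun u h => by tauto⟩

/-- Distinct graphs in the same coset of the subspace of complete bipartite graphs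
have disconnected intersection. -/
theorem same_coset_inf_disconnected {n : ℕ} (hn : 2 ≤ n)
    (G₁ G₂ : SimpleGraph (Fin n)) (hne : G₁ ≠ G₂)
    (h : ∃ S : Set (Fin n), symmDiff G₁ G₂ = B S) :
    ¬ (G₁ ⊓ G₂).Connected := by
  obtain ⟨S, hS⟩ := h
  intro hconn
  have hne' : symmDiff G₁ G₂ ≠ ⊥ := by
    simpa [symmDiff_eq_bot] using hne
  rw [hS] at hne'
  obtain ⟨u, v, huv⟩ : ∃ u v, (B S).Adj u v := by
    by_contra h'
    push_neg at h'
    apply hne'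
    ext a b
    simp only [SimpleGraph.bot_adj, iff_false]
    exact h' a b
  have key : ∀ a b, (G₁ ⊓ G₂).Adj a b → (a ∈ S ↔ b ∈ S) := by
    intro a b hab
    have hnb : ¬ (B S).Adj a b := by
      rw [← hS]
      simp only [symmDiff_def, SimpleGraph.sup_adj, SimpleGraph.sdiff_adj]
      obtain ⟨h1, h2⟩ := hab
      tauto
    simp only [B] at hnb
    tauto
  have hwalk : ∀ a b : Fin n, (G₁ ⊓ G₂).Walk a b → (a ∈ S ↔ b ∈ S) := by
    intro a b w
    induction w with
    | nil => rfl
    | cons hadj p ih => exact (key _ _ hadj).trans ih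
  obtain ⟨w⟩ := hconn.preconnected u v
  have hiff := hwalk u v w
  simp only [B] at huv
  tauto
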